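/- Let F₃ = (x₀−x₁)(x₁−x₂)(x₂−x₀)·{(x₀+x₁+x₂)³ + (x₀−x₁)(x₁−x₂)(x₂−x₀)} ∈ ℂ[x₀,x₁,x₂], a homogeneous sextic. The set of singular points of the plane curve {F₃ = 0} ⊂ ℙ²(ℂ) is exactly the four points (1:1:1), (1:1:−2), (1:−2:1) and (−2:1:1). -/
import Mathlib


open MvPolynomial

/-- The homogeneous sextic
`F₃ = (x₀−x₁)(x₁−x₂)(x₂−x₀)·{(x₀+x₁+x₂)³ + (x₀−x₁)(x₁−x₂)(x₂−x₀)}`,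
the branching locus of the singular K3 surface of discriminant 3. -/
noncomputable def F3 : MvPolynomial (Fin 3) ℂ :=
  (X 0 - X 1) * (X 1 - X 2) * (X 2 - X 0) *
    ((X 0 + X 1 + X 2) ^ 3 + (X 0 - X 1) * (X 1 - X 2) * (X 2 - X 0))

private lemma grad0 (v : Fin 3 → ℂ) : eval v (pderiv 0 F3) =
    (v 1 - v 2)*(v 1 + v 2 - 2*v 0) * ((v 0 + v 1 + v 2)^3 + (v 0 - v 1)*(v 1 - v 2)*(v 2 - v 0))
    + (v 0 - v 1)*(v 1 - v 2)*(v 2 - v 0) * (3*(v 0 + v 1 + v 2)^2 + (v 1 - v 2)*(v 1 + v 2 - 2*v 0)) := by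
  simp [F3, pderiv_mul, pderiv_pow, pderiv_X, Pi.single_apply]
  ring

private lemma grad1 (v : Fin 3 → ℂ) : eval v (pderiv 1 F3) =
    (v 2 - v 0)*(v 2 + v 0 - 2*v 1) * ((v 0 + v 1 + v 2)^3 + (v 0 - v 1)*(v 1 - v 2)*(v 2 - v 0))
    + (v 0 - v 1)*(v 1 - v 2)*(v 2 - v 0) * (3*(v 0 + v 1 + v 2)^2 + (v 2 - v 0)*(v 2 + v 0 - 2*v 1)) := by
  simp [F3, pderiv_mul, pderiv_pow, pderiv_X, Pi.single_apply]
  ring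

private lemma grad2 (v : Fin 3 → ℂ) : eval v (pderiv 2 F3) =
    (v 0 - v 1)*(v 0 + v 1 - 2*v 2) * ((v 0 + v 1 + v 2)^3 + (v 0 - v 1)*(v 1 - v 2)*(v 2 - v 0))
    + (v 0 - v 1)*(v 1 - v 2)*(v 2 - v 0) * (3*(v 0 + v 1 + v 2)^2 + (v 0 - v 1)*(v 0 + v 1 - 2*v 2)) := by
  simp [F3, pderiv_mul, pderiv_pow, pderiv_X, Pi.single_apply]
  ring

/-- Purely algebraic classification of common zeros of the gradient. -/
private lemma key (x y z : ℂ)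
    (h0 : (y - z)*(y + z - 2*x) * ((x + y + z)^3 + (x - y)*(y - z)*(z - x))
      + (x - y)*(y - z)*(z - x) * (3*(x + y + z)^2 + (y - z)*(y + z - 2*x)) = 0)
    (h1 : (z - x)*(z + x - 2*y) * ((x + y + z)^3 + (x - y)*(y - z)*(z - x))
      + (x - y)*(y - z)*(z - x) * (3*(x + y + z)^2 + (z - x)*(z + x - 2*y)) = 0)
    (h2 : (x - y)*(x + y - 2*z) * ((x + y + z)^3 + (x - y)*(y - z)*(z - x))
      + (x - y)*(y - z)*(z - x) * (3*(x + y + z)^2 + (x - y)*(x + y - 2*z)) = 0) :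
    (x = y ∧ y = z) ∨ (x = y ∧ z = -2*x) ∨ (z = x ∧ y = -2*z) ∨ (y = z ∧ x = -2*y) ∨
      (x = 0 ∧ y = 0 ∧ z = 0) := by
  have hsum : (x - y)*(y - z)*(z - x)*(x + y + z)^2 = 0 := by
    linear_combination (h0 + h1 + h2) / 9
  by_cases hS : x + y + z = 0
  · -- case S = 0 : substitute z = -x - y
    have hz : z = -x - y := by linear_combination hS
    subst hz
    have e0 : x*(x - y)*(x + 2*y)^2*(2*x + y) = 0 := by linear_combination h0 / 6
    have e1 : y*(x - y)*(x + 2*y)*(2*x + y)^2 = 0 := by linear_combination -h1 / 6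
    have e2 : (x + y)*(x - y)^2*(x + 2*y)*(2*x + y) = 0 := by linear_combination -h2 / 6
    by_cases hxy : x = y
    · exact Or.inr (Or.inl ⟨hxy, by rw [← hxy]; ring⟩)
    by_cases h12 : x + 2*y = 0
    · refine Or.inr (Or.inr (Or.inr (Or.inl ⟨by linear_combination h12, by linear_combination h12⟩)))
    by_cases h21 : 2*x + y = 0
    · refine Or.inr (Or.inr (Or.inl ⟨by linear_combination -h21, by linear_combination -h21⟩))
    · -- x+2y ≠ 0, 2x+y ≠ 0 : e0 gives x = 0, e1 gives y = 0, contradiction with x ≠ y unless both 0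
      have hx0 : x = 0 := by
        have := mul_eq_zero.mp ((mul_eq_zero.mp
          ((mul_eq_zero.mp e0).resolve_right h21)).resolve_right (pow_ne_zero 2 h12))
        rcases this with h | h
        · exact h
        · exact absurd (sub_eq_zero.mp h) hxy
      have hy0 : y = 0 := by
        have e1' : (x - y)*(x + 2*y)*(y*(2*x + y)^2) = 0 := by linear_combination e1
        have := (mul_eq_zero.mp ((mul_eq_zero.mp e1').resolve_left (by
          intro h
          rcases mul_eq_zero.mp h with h | h
          · exact hxy (sub_eq_zero.mp h)
          · exact h12 h))).resolve_right (pow_ne_zero 2 h21)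
        exact this
      exact absurd (hx0.trans hy0.symm) hxy
  · -- case S ≠ 0 : the product of differences vanishes
    have hD : (x - y)*((y - z)*(z - x)) = 0 := by
      have h := mul_eq_zero.mp hsum
      rcases h with h | h
      · linear_combination h
      · exact absurd (pow_eq_zero_iff two_ne_zero |>.mp h) hS
    rcases mul_eq_zero.mp hD with h | h
    · -- x = y
      have hxy : x = y := sub_eq_zero.mp h
      subst hxy
      have e : (x - z)^2*(x + x + z)^3 = 0 := by linear_combination -h0
      have hxz : x = z := by
        rcases mul_eq_zero.mp e with h | h
        · exact sub_eq_zero.mp (pow_eq_zero_iff two_ne_zero |>.mp h)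
        · exact absurd (pow_eq_zero_iff three_ne_zero |>.mp h) hS
      exact Or.inl ⟨rfl, hxz⟩
    rcases mul_eq_zero.mp h with h | h
    · -- y = z
      have hyz : y = z := sub_eq_zero.mp h
      subst hyz
      have e : (x - y)^2*(x + y + y)^3 = 0 := by linear_combination -h1
      have hxy : x = y := by
        rcases mul_eq_zero.mp e with h | h
        · exact sub_eq_zero.mp (pow_eq_zero_iff two_ne_zero |>.mp h)
        · exact absurd (pow_eq_zero_iff three_ne_zero |>.mp h) hS
      exact Or.inl ⟨hxy, rfl⟩
    · -- z = x
      have hzx : z = x := sub_eq_zero.mp h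
      subst hzx
      have e : (z - y)^2*(z + y + z)^3 = 0 := by linear_combination -h2
      have hxy : z = y := by
        rcases mul_eq_zero.mp e with h | h
        · exact sub_eq_zero.mp (pow_eq_zero_iff two_ne_zero |>.mp h)
        · exact absurd (pow_eq_zero_iff three_ne_zero |>.mp h) hS
      exact Or.inl ⟨hxy, hxy.symm⟩

/-- The set of singular points of the plane sextic `{F₃ = 0} ⊂ ℙ²(ℂ)` is exactly the four
points `(1:1:1)`, `(1:1:−2)`, `(1:−2:1)` and `(−2:1:1)`. -/
theorem singular_points_of_C3 (v : Fin 3 → ℂ) (hv : v ≠ 0) :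
    (∀ i : Fin 3, MvPolynomial.eval v (MvPolynomial.pderiv i F3) = 0) ↔
      ∃ c : ℂ, c ≠ 0 ∧
        (v = c • ![1, 1, 1] ∨ v = c • ![1, 1, -2] ∨ v = c • ![1, -2, 1] ∨
          v = c • ![-2, 1, 1]) := by
  constructor
  · intro h
    have h0 := h 0; rw [grad0] at h0
    have h1 := h 1; rw [grad1] at h1
    have h2 := h 2; rw [grad2] at h2
    clear h
    rcases key (v 0) (v 1) (v 2) h0 h1 h2 with ⟨hxy, hyz⟩ | ⟨hxy, hz⟩ | ⟨hzx, hy⟩ | ⟨hyz, hx⟩ |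
        ⟨hx, hy, hz⟩
    · refine ⟨v 0, fun hc => hv (funext fun i => ?_), Or.inl (funext fun i => ?_)⟩
      · fin_cases i <;> simp [← hxy, ← hyz, hc]
      · fin_cases i <;> simp [hxy, hyz]
    · refine ⟨v 0, fun hc => hv (funext fun i => ?_), Or.inr (Or.inl (funext fun i => ?_))⟩
      · fin_cases i <;> simp [hz, ← hxy, hc]
      · fin_cases i <;> simp [← hxy, hz] <;> ring
    · refine ⟨v 2, fun hc => hv (funext fun i => ?_),
        Or.inr (Or.inr (Or.inl (funext fun i => ?_)))⟩
      · fin_cases i <;> simp [hy, ← hzx, hc]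
      · fin_cases i <;> simp [hy, ← hzx] <;> ring
    · refine ⟨v 1, fun hc => hv (funext fun i => ?_),
        Or.inr (Or.inr (Or.inr (funext fun i => ?_)))⟩
      · fin_cases i <;> simp [hx, ← hyz, hc]
      · fin_cases i <;> simp [hx, ← hyz] <;> ring
    · exact absurd (_root_.funext fun i => by fin_cases i <;> simp [hx, hy, hz]) hv
  · rintro ⟨c, hc, h | h | h | h⟩
    · subst h
      intro i
      have H0 : eval (c • ![(1:ℂ), 1, 1]) (pderiv 0 F3) = 0 := by
        rw [grad0]
        simp only [Pi.smul_apply, Matrix.cons_val_zero, Matrix.cons_val_one, Matrix.head_cons,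
          Matrix.cons_val_two, Matrix.tail_cons, smul_eq_mul]
        ring
      have H1 : eval (c • ![(1:ℂ), 1, 1]) (pderiv 1 F3) = 0 := by
        rw [grad1]
        simp only [Pi.smul_apply, Matrix.cons_val_zero, Matrix.cons_val_one, Matrix.head_cons,
          Matrix.cons_val_two, Matrix.tail_cons, smul_eq_mul]
        ring
      have H2 : eval (c • ![(1:ℂ), 1, 1]) (pderiv 2 F3) = 0 := by
        rw [grad2]
        simp only [Pi.smul_apply, Matrix.cons_val_zero, Matrix.cons_val_one, Matrix.head_cons,
          Matrix.cons_val_two, Matrix.tail_cons, smul_eq_mul]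
        ring
      fin_cases i
      exacts [H0, H1, H2]
    · subst h
      intro i
      have H0 : eval (c • ![(1:ℂ), 1, -2]) (pderiv 0 F3) = 0 := by
        rw [grad0]
        simp only [Pi.smul_apply, Matrix.cons_val_zero, Matrix.cons_val_one, Matrix.head_cons,
          Matrix.cons_val_two, Matrix.tail_cons, smul_eq_mul]
        ring
      have H1 : eval (c • ![(1:ℂ), 1, -2]) (pderiv 1 F3) = 0 := by
        rw [grad1]
        simp only [Pi.smul_apply, Matrix.cons_val_zero, Matrix.cons_val_one, Matrix.head_cons,
          Matrix.cons_val_two, Matrix.tail_cons, smul_eq_mul]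
        ring
      have H2 : eval (c • ![(1:ℂ), 1, -2]) (pderiv 2 F3) = 0 := by
        rw [grad2]
        simp only [Pi.smul_apply, Matrix.cons_val_zero, Matrix.cons_val_one, Matrix.head_cons,
          Matrix.cons_val_two, Matrix.tail_cons, smul_eq_mul]
        ring
      fin_cases i
      exacts [H0, H1, H2]
    · subst h
      intro i
      have H0 : eval (c • ![(1:ℂ), -2, 1]) (pderiv 0 F3) = 0 := by
        rw [grad0]
        simp only [Pi.smul_apply, Matrix.cons_val_zero, Matrix.cons_val_one, Matrix.head_cons,
          Matrix.cons_val_two, Matrix.tail_cons, smul_eq_mul]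
        ring
      have H1 : eval (c • ![(1:ℂ), -2, 1]) (pderiv 1 F3) = 0 := by
        rw [grad1]
        simp only [Pi.smul_apply, Matrix.cons_val_zero, Matrix.cons_val_one, Matrix.head_cons,
          Matrix.cons_val_two, Matrix.tail_cons, smul_eq_mul]
        ring
      have H2 : eval (c • ![(1:ℂ), -2, 1]) (pderiv 2 F3) = 0 := by
        rw [grad2]
        simp only [Pi.smul_apply, Matrix.cons_val_zero, Matrix.cons_val_one, Matrix.head_cons,
          Matrix.cons_val_two, Matrix.tail_cons, smul_eq_mul]
        ring
      fin_cases i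
      exacts [H0, H1, H2]
    · subst h
      intro i
      have H0 : eval (c • ![(-2:ℂ), 1, 1]) (pderiv 0 F3) = 0 := by
        rw [grad0]
        simp only [Pi.smul_apply, Matrix.cons_val_zero, Matrix.cons_val_one, Matrix.head_cons,
          Matrix.cons_val_two, Matrix.tail_cons, smul_eq_mul]
        ring
      have H1 : eval (c • ![(-2:ℂ), 1, 1]) (pderiv 1 F3) = 0 := by
        rw [grad1]
        simp only [Pi.smul_apply, Matrix.cons_val_zero, Matrix.cons_val_one, Matrix.head_cons,
          Matrix.cons_val_two, Matrix.tail_cons, smul_eq_mul]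
        ring
      have H2 : eval (c • ![(-2:ℂ), 1, 1]) (pderiv 2 F3) = 0 := by
        rw [grad2]
        simp only [Pi.smul_apply, Matrix.cons_val_zero, Matrix.cons_val_one, Matrix.head_cons,
          Matrix.cons_val_two, Matrix.tail_cons, smul_eq_mul]
        ring
      fin_cases i
      exacts [H0, H1, H2]
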